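/- Let K ≥ 1 and 1/2 < p₂ ≤ p₁ be real numbers with p₁ < (3/2)·p₂ − 5/4, and let V̄ : (0,∞) → ℝ be a measurable locally bounded function such that y^(2p₂) ≤ exp(2·V̄(y)) ≤ y^(2p₁) for all y ≥ K. Suppose v² : [K,∞) → [0,∞) is measurable and satisfies v²(y) ≤ C₂·y^(4(p₁−p₂+1)) for all y ≥ K with some constant C₂ > 0. Then for every ξ ≥ K, v³(ξ) := 6·∫_K^ξ exp(2·V̄(y₁)) · ( ∫_{y₁}^∞ v²(y₂)·exp(−2·V̄(y₂)) dy₂ ) dy₁ is finite and there exists a constant C₃ (depending only on p₁, p₂, C₂) such that v³(ξ) ≤ C₃·ξ^(6(p₁−p₂+1)). -/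

import Mathlib

open MeasureTheory

/-- Under `y^(2p₂) ≤ exp(2·V̄(y)) ≤ y^(2p₁)` for `y ≥ K` (with
`K ≥ 1`, `1/2 < p₂ ≤ p₁`, `p₁ < (3/2)p₂ − 5/4`), if `v² ≥ 0` is measurable
with `v²(y) ≤ C₂·y^(4(p₁−p₂+1))` for `y ≥ K`, then for every `ξ ≥ K`
`v³(ξ) = 6·∫_K^ξ e^{2V̄(y₁)} (∫_{y₁}^∞ v²(y₂) e^{−2V̄(y₂)} dy₂) dy₁`
is finite (all integrals involved converge), and there is a constant `C₃`
(depending only on `p₁, p₂, C₂`) with `v³(ξ) ≤ C₃·ξ^(6(p₁−p₂+1))`. -/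
theorem third_moment_bound
    (K p₁ p₂ : ℝ) (hK : 1 ≤ K) (hp₂ : 1 / 2 < p₂) (hp : p₂ ≤ p₁)
    (hp' : p₁ < (3 / 2) * p₂ - 5 / 4)
    (Vbar : ℝ → ℝ) (hmeas : Measurable Vbar)
    (hloc : ∀ a b : ℝ, 0 < a → ∃ M : ℝ, ∀ y ∈ Set.Icc a b, |Vbar y| ≤ M)
    (hlb : ∀ y : ℝ, K ≤ y → y ^ (2 * p₂) ≤ Real.exp (2 * Vbar y))
    (hub : ∀ y : ℝ, K ≤ y → Real.exp (2 * Vbar y) ≤ y ^ (2 * p₁))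
    (v₂ : ℝ → ℝ) (hv₂meas : Measurable v₂)
    (hv₂nonneg : ∀ y : ℝ, K ≤ y → 0 ≤ v₂ y)
    (C₂ : ℝ) (hC₂ : 0 < C₂)
    (hv₂ : ∀ y : ℝ, K ≤ y → v₂ y ≤ C₂ * y ^ (4 * (p₁ - p₂ + 1))) :
    (∀ ξ : ℝ, K ≤ ξ →
      (∀ y₁ : ℝ, K ≤ y₁ →
          IntegrableOn (fun y₂ => v₂ y₂ * Real.exp (-(2 * Vbar y₂)))
            (Set.Ioi y₁)) ∧
        IntervalIntegrable
          (fun y₁ => Real.exp (2 * Vbar y₁) *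
            ∫ y₂ in Set.Ioi y₁, v₂ y₂ * Real.exp (-(2 * Vbar y₂)))
          volume K ξ) ∧
      ∃ C₃ : ℝ, ∀ ξ : ℝ, K ≤ ξ →
        6 * ∫ y₁ in K..ξ, Real.exp (2 * Vbar y₁) *
            ∫ y₂ in Set.Ioi y₁, v₂ y₂ * Real.exp (-(2 * Vbar y₂)) ≤
          C₃ * ξ ^ (6 * (p₁ - p₂ + 1)) := by
  have hKpos : (0:ℝ) < K := lt_of_lt_of_le one_pos hK
  set α : ℝ := 4 * (p₁ - p₂ + 1) - 2 * p₂ with hα_def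
  have hα : α < -1 := by rw [hα_def]; linarith
  have hd : (0:ℝ) < -(α + 1) := by linarith
  set f : ℝ → ℝ := fun y₂ => v₂ y₂ * Real.exp (-(2 * Vbar y₂)) with hf_def
  have hf_meas : Measurable f := hv₂meas.mul ((measurable_const.mul hmeas).neg.exp)
  have hf_nonneg : ∀ x : ℝ, K ≤ x → 0 ≤ f x := fun x hx =>
    mul_nonneg (hv₂nonneg x hx) (Real.exp_pos _).le
  have hf_le : ∀ x : ℝ, K ≤ x → f x ≤ C₂ * x ^ α := by
    intro x hx
    have hx0 : (0:ℝ) < x := lt_of_lt_of_le hKpos hx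
    have h1 : Real.exp (-(2 * Vbar x)) ≤ x ^ (-(2 * p₂)) := by
      rw [Real.exp_neg, Real.rpow_neg hx0.le]
      exact inv_anti₀ (Real.rpow_pos_of_pos hx0 _) (hlb x hx)
    have h2 := hv₂ x hx
    calc f x ≤ (C₂ * x ^ (4 * (p₁ - p₂ + 1))) * x ^ (-(2 * p₂)) :=
          mul_le_mul h2 h1 (Real.exp_pos _).le (by positivity)
      _ = C₂ * x ^ α := by
          rw [mul_assoc, ← Real.rpow_add hx0, hα_def]; ring_nf
  -- integrability on Ioi y₁
  have hInt : ∀ y₁ : ℝ, K ≤ y₁ → IntegrableOn f (Set.Ioi y₁) := by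
    intro y₁ hy₁
    have hy₁0 : (0:ℝ) < y₁ := lt_of_lt_of_le hKpos hy₁
    have hmaj : IntegrableOn (fun x : ℝ => C₂ * x ^ α) (Set.Ioi y₁) :=
      (integrableOn_Ioi_rpow_of_lt hα hy₁0).const_mul C₂
    refine hmaj.mono' hf_meas.aestronglyMeasurable ?_
    filter_upwards [ae_restrict_mem measurableSet_Ioi] with x hx
    have hKx : K ≤ x := le_of_lt (lt_of_le_of_lt hy₁ hx)
    rw [Real.norm_eq_abs, abs_of_nonneg (hf_nonneg x hKx)]
    exact hf_le x hKx
  set g : ℝ → ℝ := fun y₁ => ∫ x in Set.Ioi y₁, f x with hg_def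
  have hg_nonneg : ∀ y₁ : ℝ, K ≤ y₁ → 0 ≤ g y₁ := by
    intro y₁ hy₁
    apply setIntegral_nonneg measurableSet_Ioi
    intro x hx; exact hf_nonneg x (le_of_lt (lt_of_le_of_lt hy₁ hx))
  have hg_le : ∀ y₁ : ℝ, K ≤ y₁ → g y₁ ≤ C₂ * (y₁ ^ (α + 1) / (-(α + 1))) := by
    intro y₁ hy₁
    have hy₁0 : (0:ℝ) < y₁ := lt_of_lt_of_le hKpos hy₁
    have h1 : g y₁ ≤ ∫ x in Set.Ioi y₁, C₂ * x ^ α := by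
      refine setIntegral_mono_on (hInt y₁ hy₁)
        ((integrableOn_Ioi_rpow_of_lt hα hy₁0).const_mul C₂) measurableSet_Ioi ?_
      intro x hx; exact hf_le x (le_of_lt (lt_of_le_of_lt hy₁ hx))
    calc g y₁ ≤ ∫ x in Set.Ioi y₁, C₂ * x ^ α := h1
      _ = C₂ * ∫ x in Set.Ioi y₁, x ^ α := integral_const_mul _ _
      _ = C₂ * (y₁ ^ (α + 1) / (-(α + 1))) := by
          rw [integral_Ioi_rpow_of_lt hα hy₁0]; rw [neg_div, ← div_neg]
  have hg_meas : Measurable g := by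
    have hF : StronglyMeasurable (fun p : ℝ × ℝ => if p.1 < p.2 then f p.2 else 0) :=
      (Measurable.ite (measurableSet_lt measurable_fst measurable_snd) (hf_meas.comp measurable_snd)
        measurable_const).stronglyMeasurable
    have := hF.integral_prod_right' (ν := volume)
    have heq : g = fun y₁ => ∫ x, if y₁ < x then f x else 0 := by
      funext y₁
      show (∫ x in Set.Ioi y₁, f x) = _
      rw [← integral_indicator measurableSet_Ioi]
      congr 1
    rw [heq]; exact this.measurable
  set h : ℝ → ℝ := fun y₁ => Real.exp (2 * Vbar y₁) * g y₁ with hh_def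
  have hh_meas : Measurable h := ((measurable_const.mul hmeas).exp).mul hg_meas
  have h2p₁ : (0:ℝ) ≤ 2 * p₁ := by linarith
  have hh_le : ∀ y₁ : ℝ, K ≤ y₁ →
      h y₁ ≤ (C₂ / (-(α + 1))) * y₁ ^ (2 * p₁ + (α + 1)) := by
    intro y₁ hy₁
    have hy₁0 : (0:ℝ) < y₁ := lt_of_lt_of_le hKpos hy₁
    have h1 : h y₁ ≤ y₁ ^ (2 * p₁) * (C₂ * (y₁ ^ (α + 1) / (-(α + 1)))) := by
      refine mul_le_mul (hub y₁ hy₁) (hg_le y₁ hy₁) (hg_nonneg y₁ hy₁) ?_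
      positivity
    calc h y₁ ≤ y₁ ^ (2 * p₁) * (C₂ * (y₁ ^ (α + 1) / (-(α + 1)))) := h1
      _ = (C₂ / (-(α + 1))) * (y₁ ^ (2 * p₁) * y₁ ^ (α + 1)) := by ring
      _ = (C₂ / (-(α + 1))) * y₁ ^ (2 * p₁ + (α + 1)) := by
          rw [← Real.rpow_add hy₁0]
  -- interval integrability of h on [K, ξ]
  have hII : ∀ ξ : ℝ, K ≤ ξ → IntervalIntegrable h volume K ξ := by
    intro ξ hξ
    rw [intervalIntegrable_iff, Set.uIoc_of_le hξ]
    have hconst : IntegrableOn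
        (fun _ : ℝ => ξ ^ (2 * p₁) * (C₂ * (K ^ (α + 1) / (-(α + 1)))))
        (Set.Ioc K ξ) := integrableOn_const measure_Ioc_lt_top.ne
    refine hconst.mono' hh_meas.aestronglyMeasurable ?_
    filter_upwards [ae_restrict_mem measurableSet_Ioc] with x hx
    have hKx : K ≤ x := hx.1.le
    have hx0 : (0:ℝ) < x := lt_of_lt_of_le hKpos hKx
    rw [Real.norm_eq_abs, abs_of_nonneg
      (mul_nonneg (Real.exp_pos _).le (hg_nonneg x hKx))]
    have h1 : h x ≤ x ^ (2 * p₁) * (C₂ * (x ^ (α + 1) / (-(α + 1)))) :=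
      mul_le_mul (hub x hKx) (hg_le x hKx) (hg_nonneg x hKx) (by positivity)
    refine h1.trans ?_
    have h2 : x ^ (2 * p₁) ≤ ξ ^ (2 * p₁) := Real.rpow_le_rpow hx0.le hx.2 h2p₁
    have h3 : x ^ (α + 1) ≤ K ^ (α + 1) :=
      Real.rpow_le_rpow_of_nonpos hKpos hKx (by linarith)
    have h4 : C₂ * (x ^ (α + 1) / (-(α + 1))) ≤ C₂ * (K ^ (α + 1) / (-(α + 1))) := by
      apply mul_le_mul_of_nonneg_left _ hC₂.le
      exact div_le_div_of_nonneg_right h3 hd.le |>.trans_eq rfl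
    exact mul_le_mul h2 h4
      (mul_nonneg hC₂.le (div_nonneg (Real.rpow_nonneg hx0.le _) hd.le))
      (Real.rpow_nonneg (by linarith : (0:ℝ) ≤ ξ) _)
  refine ⟨fun ξ hξ => ⟨fun y₁ hy₁ => hInt y₁ hy₁, hII ξ hξ⟩, ?_⟩
  -- the bound
  set β : ℝ := 2 * p₁ + (α + 1) with hβ_def
  have hβ : (-1:ℝ) < β := by rw [hβ_def, hα_def]; linarith
  have hβ1 : (0:ℝ) < β + 1 := by linarith
  set c : ℝ := C₂ / (-(α + 1)) with hc_def
  have hc : (0:ℝ) < c := div_pos hC₂ hd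
  refine ⟨6 * c / (β + 1), ?_⟩
  intro ξ hξ
  have hξ0 : (0:ℝ) < ξ := lt_of_lt_of_le hKpos hξ
  have hmaj : IntervalIntegrable (fun y : ℝ => c * y ^ β) volume K ξ :=
    (intervalIntegral.intervalIntegrable_rpow' hβ).const_mul c
  have hmono : ∫ y₁ in K..ξ, h y₁ ≤ ∫ y₁ in K..ξ, c * y₁ ^ β := by
    refine intervalIntegral.integral_mono_on hξ (hII ξ hξ) hmaj ?_
    intro x hx
    exact hh_le x hx.1
  have hcalc : ∫ y₁ in K..ξ, c * y₁ ^ β = c * ((ξ ^ (β + 1) - K ^ (β + 1)) / (β + 1)) := by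
    rw [intervalIntegral.integral_const_mul, integral_rpow (Or.inl hβ)]
  have hKβ : (0:ℝ) ≤ K ^ (β + 1) := Real.rpow_nonneg hKpos.le _
  have hfinal : ∫ y₁ in K..ξ, h y₁ ≤ c * (ξ ^ (β + 1) / (β + 1)) := by
    refine hmono.trans ?_
    rw [hcalc]
    apply mul_le_mul_of_nonneg_left _ hc.le
    apply div_le_div_of_nonneg_right _ hβ1.le
    linarith
  have hexp : (6:ℝ) * (p₁ - p₂ + 1) = β + 1 := by rw [hβ_def, hα_def]; ring
  calc 6 * ∫ y₁ in K..ξ, h y₁ ≤ 6 * (c * (ξ ^ (β + 1) / (β + 1))) := by linarith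
    _ = 6 * c / (β + 1) * ξ ^ (β + 1) := by ring
    _ = 6 * c / (β + 1) * ξ ^ (6 * (p₁ - p₂ + 1)) := by rw [hexp]
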